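/- Let n ≥ 0, let N = 4n+2, and let A be an N×N integer alternating-sign matrix (all partial sums of each row and each column lie in {0,1}, and each full row sum and column sum equals 1) such that A is invariant under the half-turn rotation, A(i,j) = A(N−1−i, N−1−j) for all i,j, and invariant under the quarter-turn rotation away from the center, A(i,j) = A(j, N−1−i) for all (i,j) with {i,j} ⊄ {2n, 2n+1}, i.e. for all (i,j) outside the central 2×2 block {2n,2n+1}×{2n,2n+1}. Then exactly two of the four central entries A(2n,2n), A(2n,2n+1), A(2n+1,2n), A(2n+1,2n+1) are equal to 0. -/

import Mathlib

/-- `A` is an alternating-sign matrix: every partial sum (from the start) of each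
row and each column lies in `{0, 1}`, and each full row sum and column sum equals `1`. -/
def IsASM {N : ℕ} (A : Matrix (Fin N) (Fin N) ℤ) : Prop :=
  (∀ i k : Fin N, (∑ j ∈ Finset.univ.filter (· ≤ k), A i j) ∈ ({0, 1} : Set ℤ)) ∧
  (∀ j k : Fin N, (∑ i ∈ Finset.univ.filter (· ≤ k), A i j) ∈ ({0, 1} : Set ℤ)) ∧
  (∀ i : Fin N, ∑ j, A i j = 1) ∧
  (∀ j : Fin N, ∑ i, A i j = 1)

/-- Let `N = 4n+2` and let `A` be an `N × N` alternating-sign matrix which is invariant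
under the half-turn rotation and invariant under the quarter-turn rotation away from the
central `2 × 2` block `{2n, 2n+1} × {2n, 2n+1}`. Then exactly two of the four central
entries of `A` are equal to `0`. -/
theorem qqt_invariant_asm_center (n : ℕ)
    (A : Matrix (Fin (4 * n + 2)) (Fin (4 * n + 2)) ℤ) (hASM : IsASM A)
    (hHT : ∀ i j : Fin (4 * n + 2), A i j = A i.rev j.rev)
    (hQT : ∀ i j : Fin (4 * n + 2),
      ¬(((i : ℕ) = 2 * n ∨ (i : ℕ) = 2 * n + 1) ∧
        ((j : ℕ) = 2 * n ∨ (j : ℕ) = 2 * n + 1)) →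
      A i j = A j i.rev) :
    ([A ⟨2 * n, by omega⟩ ⟨2 * n, by omega⟩,
      A ⟨2 * n, by omega⟩ ⟨2 * n + 1, by omega⟩,
      A ⟨2 * n + 1, by omega⟩ ⟨2 * n, by omega⟩,
      A ⟨2 * n + 1, by omega⟩ ⟨2 * n + 1, by omega⟩] : List ℤ).count 0 = 2 := by
  obtain ⟨hrow, hcol, hrowsum, hcolsum⟩ := hASM
  set c : Fin (4*n+2) := ⟨2*n, by omega⟩ with hc
  set c1 : Fin (4*n+2) := ⟨2*n+1, by omega⟩ with hc1
  have hcrev : c.rev = c1 := by ext; simp [Fin.val_rev, hc, hc1]; omega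
  have hc1rev : c1.rev = c := by ext; simp [Fin.val_rev, hc, hc1]; omega
  set a : ℤ := A c c with ha
  set b : ℤ := A c c1 with hb
  -- the other two central entries
  have hA11 : A c1 c1 = a := by rw [hHT c1 c1, hc1rev]
  have hA10 : A c1 c = b := by rw [hHT c1 c, hc1rev, hcrev]
  -- step lemma for partial row sums
  have hstep : ∀ i : Fin (4*n+2),
      (∑ j ∈ Finset.univ.filter (· ≤ c1), A i j)
        = (∑ j ∈ Finset.univ.filter (· ≤ c), A i j) + A i c1 := by
    intro i
    have hset : Finset.univ.filter (· ≤ c1) =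
        insert c1 (Finset.univ.filter (· ≤ c)) := by
      ext j
      simp only [Finset.mem_filter, Finset.mem_univ, true_and, Finset.mem_insert]
      constructor
      · intro h
        rcases eq_or_lt_of_le h with h | h
        · exact Or.inl h
        · exact Or.inr (by rw [Fin.le_def]; rw [Fin.lt_def] at h; simp [hc, hc1] at *; omega)
      · rintro (rfl | h)
        · exact le_refl _
        · rw [Fin.le_def] at *; simp [hc, hc1] at *; omega
    rw [hset, Finset.sum_insert (by simp [Fin.le_def, hc, hc1])]
    ring
  have hmem : ∀ x ∈ ({0,1} : Set ℤ), x = 0 ∨ x = 1 := by intro x hx; simpa using hx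
  -- bounds on a and b
  have hbbound : -1 ≤ b ∧ b ≤ 1 := by
    have h1 := hmem _ (hrow c c1); have h2 := hmem _ (hrow c c)
    have := hstep c
    rw [← hb] at this
    constructor <;> omega
  have habound : -1 ≤ a ∧ a ≤ 1 := by
    have h1 := hmem _ (hrow c1 c1); have h2 := hmem _ (hrow c1 c)
    have := hstep c1
    rw [hA11] at this
    constructor <;> omega
  -- quadrant index sets
  set L : Finset (Fin (4*n+2)) := Finset.univ.filter (fun i => (i:ℕ) ≤ 2*n) with hL
  set H : Finset (Fin (4*n+2)) := Finset.univ.filter (fun i => ¬ (i:ℕ) ≤ 2*n) with hH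
  have revLH : ∀ f : Fin (4*n+2) → ℤ, ∑ i ∈ H, f i = ∑ i ∈ L, f i.rev := by
    intro f
    refine Finset.sum_nbij' (fun i => i.rev) (fun i => i.rev) ?_ ?_ ?_ ?_ ?_
    · intro i hi; simp only [hH, hL, Finset.mem_filter, Finset.mem_univ, true_and,
        Fin.val_rev] at *; omega
    · intro i hi; simp only [hH, hL, Finset.mem_filter, Finset.mem_univ, true_and,
        Fin.val_rev] at *; omega
    · intro i _; exact Fin.rev_rev i
    · intro i _; exact Fin.rev_rev i
    · intro i _; simp [Fin.rev_rev]
  -- total sum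
  have htot : ∑ i, ∑ j, A i j = (4*n+2 : ℤ) := by
    simp [hrowsum]
  have hsplit : ∀ g : Fin (4*n+2) → ℤ, ∑ i, g i = ∑ i ∈ L, g i + ∑ i ∈ H, g i := by
    intro g; rw [hL, hH]; exact (Finset.sum_filter_add_sum_filter_not _ _ _).symm
  -- claim: THH = TLL
  have hHH : ∑ i ∈ H, ∑ j ∈ H, A i j = ∑ i ∈ L, ∑ j ∈ L, A i j := by
    rw [revLH (fun i => ∑ j ∈ H, A i j)]
    refine Finset.sum_congr rfl (fun i _ => ?_)
    rw [revLH (fun j => A i.rev j)]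
    exact Finset.sum_congr rfl (fun j _ => (hHT i j).symm)
  -- claim: THL = TLH
  have hHL : ∑ i ∈ H, ∑ j ∈ L, A i j = ∑ i ∈ L, ∑ j ∈ H, A i j := by
    rw [revLH (fun i => ∑ j ∈ L, A i j)]
    refine Finset.sum_congr rfl (fun i _ => ?_)
    rw [revLH (fun j => A i j)]
    refine Finset.sum_congr rfl (fun j _ => ?_)
    rw [hHT i j.rev, Fin.rev_rev]
  -- claim: TLH = TLL + (b - a)
  have hdiff : ∑ p ∈ L ×ˢ L, (A p.2 p.1.rev - A p.1 p.2) = b - a := by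
    rw [Finset.sum_eq_single_of_mem ((c, c) : Fin (4*n+2) × Fin (4*n+2))]
    · show A c c.rev - A c c = b - a
      rw [hcrev, ← hb, ← ha]
    · simp [hL, Finset.mem_product, hc]
    · rintro ⟨i, j⟩ hp hne
      simp only [Finset.mem_product, hL, Finset.mem_filter, Finset.mem_univ, true_and] at hp
      have hq := hQT i j ?_
      · rw [hq]; ring
      · rintro ⟨h1, h2⟩
        have hi : i = c := Fin.ext (by simp only [hc]; omega)
        have hj : j = c := Fin.ext (by simp only [hc]; omega)
        rw [hi, hj] at hne
        exact hne rfl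
  have hLH : ∑ i ∈ L, ∑ j ∈ H, A i j = ∑ i ∈ L, ∑ j ∈ L, A i j + (b - a) := by
    have e1 : ∑ i ∈ L, ∑ j ∈ H, A i j = ∑ i ∈ L, ∑ j ∈ L, A i j.rev := by
      refine Finset.sum_congr rfl (fun i _ => ?_)
      exact revLH (fun j => A i j)
    have e2 : ∑ i ∈ L, ∑ j ∈ L, A i j.rev = ∑ j ∈ L, ∑ i ∈ L, A i j.rev :=
      Finset.sum_comm (s := L) (t := L) (f := fun x y => A x y.rev)
    have e3 : ∑ p ∈ L ×ˢ L, A p.2 p.1.rev = ∑ i ∈ L, ∑ j ∈ L, A j i.rev := by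
      rw [Finset.sum_product]
    have e4 : ∑ p ∈ L ×ˢ L, A p.1 p.2 = ∑ i ∈ L, ∑ j ∈ L, A i j := by
      rw [Finset.sum_product]
    rw [Finset.sum_sub_distrib, e3, e4] at hdiff
    rw [e1, e2]
    -- goal: ∑ j ∈ L, ∑ i ∈ L, A i j.rev = ∑ i ∈ L, ∑ j ∈ L, A i j + (b-a)
    have : ∑ i ∈ L, ∑ j ∈ L, A j i.rev = ∑ j ∈ L, ∑ i ∈ L, A i j.rev := rfl
    omega
  -- combine
  have hmain : 4 * (∑ i ∈ L, ∑ j ∈ L, A i j) + 2*b - 2*a = 4*n+2 := by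
    rw [hsplit (fun i => ∑ j, A i j)] at htot
    have hi1 : ∑ i ∈ L, ∑ j, A i j = ∑ i ∈ L, (∑ j ∈ L, A i j + ∑ j ∈ H, A i j) :=
      Finset.sum_congr rfl (fun i _ => hsplit (fun j => A i j))
    have hi2 : ∑ i ∈ H, ∑ j, A i j = ∑ i ∈ H, (∑ j ∈ L, A i j + ∑ j ∈ H, A i j) :=
      Finset.sum_congr rfl (fun i _ => hsplit (fun j => A i j))
    rw [hi1, hi2, Finset.sum_add_distrib, Finset.sum_add_distrib, hHH, hHL, hLH] at htot
    linarith
  -- conclude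
  show ([A c c, A c c1, A c1 c, A c1 c1] : List ℤ).count 0 = 2
  rw [hA10, hA11, ← ha, ← hb]
  set S := ∑ i ∈ L, ∑ j ∈ L, A i j with hS
  obtain ⟨ha1, ha2⟩ := habound
  obtain ⟨hb1, hb2⟩ := hbbound
  clear_value S a b
  interval_cases a <;> interval_cases b <;> first
    | (exfalso; omega)
    | decide
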